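/- Let U ⊆ ℂⁿ be a nonempty connected open set and let G be a (not necessarily finitely generated) subgroup of the group of permutations of U all of whose elements are holomorphic. If the set Ω(G) = {x ∈ U : the G-orbit of x is finite} has positive Lebesgue measure, then G is periodic of finite exponent: there exists m ≥ 1 such that g^m = id for every g ∈ G. -/

import Mathlib

open MeasureTheory
open scoped Classical
open Filter Metric


lemma one_var_null {E : Type*} [NormedAddCommGroup E] [NormedSpace ℂ E]
    {h : ℂ → E} {D : Set ℂ} (hDc : IsPreconnected D)
    (hh : ∀ z ∈ D, AnalyticAt ℂ h z) {b : ℂ} (hb : b ∈ D) (hb0 : h b ≠ 0) :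
    volume {z ∈ D | h z = 0} = 0 := by
  apply measure_null_of_locally_null
  intro z hz
  obtain ⟨hzD, hz0⟩ := hz
  rcases (hh z hzD).eventually_eq_zero_or_eventually_ne_zero with hev | hne
  · exact absurd (AnalyticOnNhd.eqOn_zero_of_preconnected_of_eventuallyEq_zero hh hDc hzD hev hb)
      hb0
  · refine ⟨{z}, ?_, measure_singleton z⟩
    rw [eventually_nhdsWithin_iff] at hne
    obtain ⟨V, hVz, hVo, hV⟩ := _root_.eventually_nhds_iff.mp hne
    rw [mem_nhdsWithin]
    refine ⟨V, hVo, hV, ?_⟩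
    rintro w ⟨hwV, hwD, hw0⟩
    by_contra hne'
    exact hVz w hwV (by simpa using hne') hw0

lemma aux_prod {n : ℕ} {E : Type*} [NormedAddCommGroup E] [NormedSpace ℂ E]
    (IH : ∀ (f : (Fin n → ℂ) → E) (W : Set (Fin n → ℂ)), IsOpen W →
      (∀ x ∈ W, AnalyticAt ℂ f x) →
      volume {x | x ∈ W ∧ f x = 0 ∧ ¬ ∀ᶠ y in nhds x, f y = 0} = 0)
    (g : ℂ × (Fin n → ℂ) → E) (W : Set (ℂ × (Fin n → ℂ))) (hW : IsOpen W)
    (hg : ∀ x ∈ W, AnalyticAt ℂ g x) :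
    volume {x | x ∈ W ∧ g x = 0 ∧ ¬ ∀ᶠ y in nhds x, g y = 0} = 0 := by
  apply measure_null_of_locally_null
  rintro a ⟨haW, ha0, hanev⟩
  obtain ⟨r, hr, hball⟩ := Metric.mem_nhds_iff.mp (hW.mem_nhds haW)
  -- a point in the ball where g ≠ 0
  have hfreq : ∃ᶠ y in nhds a, g y ≠ 0 := by
    simpa [Filter.not_eventually] using hanev
  obtain ⟨b, hb0, hbball⟩ :=
    (hfreq.and_eventually (isOpen_ball.eventually_mem (mem_ball_self hr))).exists
  have hmem : ∀ p : ℂ × (Fin n → ℂ), p ∈ ball a r ↔ p.1 ∈ ball a.1 r ∧ p.2 ∈ ball a.2 r := by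
    intro p
    rw [← ball_prod_same]
    simp [Set.mem_prod]
  have hb1 : b.1 ∈ ball a.1 r := ((hmem b).mp hbball).1
  have hb2 : b.2 ∈ ball a.2 r := ((hmem b).mp hbball).2
  set Z := {x : ℂ × (Fin n → ℂ) | x ∈ ball a r ∧ g x = 0} with hZdef
  have hZm : MeasurableSet Z := by
    have hcontP : ContinuousOn g (ball a r) := fun x hx =>
      ((hg x (hball hx)).continuousAt).continuousWithinAt
    have hO : IsOpen (ball a r ∩ g ⁻¹' ({(0:E)}ᶜ)) :=
      hcontP.isOpen_inter_preimage isOpen_ball isOpen_compl_singleton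
    have : Z = ball a r \ (ball a r ∩ g ⁻¹' ({(0:E)}ᶜ)) := by
      ext x
      simp only [hZdef, Set.mem_setOf_eq, Set.mem_diff, Set.mem_inter_iff, Set.mem_preimage,
        Set.mem_compl_iff, Set.mem_singleton_iff]
      tauto
    rw [this]
    exact isOpen_ball.measurableSet.diff hO.measurableSet
  refine ⟨Z, ?_, ?_⟩
  · rw [mem_nhdsWithin]
    exact ⟨ball a r, isOpen_ball, mem_ball_self hr, by rintro x ⟨hx1, hx2⟩; exact ⟨hx1, hx2.2.1⟩⟩
  · -- volume Z = 0 via Fubini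
    rw [Measure.volume_eq_prod, Measure.prod_apply_symm hZm]
    have hA : volume {z' : Fin n → ℂ | z' ∈ ball a.2 r ∧ g (b.1, z') = 0} = 0 := by
      have hk : ∀ z' ∈ ball a.2 r, AnalyticAt ℂ (fun z' => g (b.1, z')) z' := by
        intro z' hz'
        exact (hg _ (hball ((hmem (b.1, z')).mpr ⟨hb1, hz'⟩))).comp
          (analyticAt_const.prod analyticAt_id)
      apply measure_mono_null _ (IH (fun z' => g (b.1, z')) (ball a.2 r) isOpen_ball hk)
      rintro z' ⟨hz', hz0⟩
      refine ⟨hz', hz0, fun hev => ?_⟩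
      have : g (b.1, b.2) = 0 :=
        AnalyticOnNhd.eqOn_zero_of_preconnected_of_eventuallyEq_zero hk
          (convex_ball a.2 r).isPreconnected hz' hev hb2
      exact hb0 (by simpa using this)
    have hae : ∀ᵐ z' : Fin n → ℂ,
        volume ((fun z₁ => (z₁, z')) ⁻¹' Z) = 0 := by
      have hcompl := measure_eq_zero_iff_ae_notMem.mp hA
      filter_upwards [hcompl] with z' hz'
      by_cases hz'b : z' ∈ ball a.2 r
      · have hgb : g (b.1, z') ≠ 0 := fun h => hz' ⟨hz'b, h⟩
        have hh : ∀ z₁ ∈ ball a.1 r, AnalyticAt ℂ (fun z₁ => g (z₁, z')) z₁ := by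
          intro z₁ hz₁
          have hinner : AnalyticAt ℂ (fun x : ℂ => (x, z')) z₁ :=
            analyticAt_id.prod analyticAt_const
          exact AnalyticAt.comp (f := fun x : ℂ => (x, z'))
            (hg _ (hball ((hmem (z₁, z')).mpr ⟨hz₁, hz'b⟩))) hinner
        apply measure_mono_null _
          (one_var_null (convex_ball a.1 r).isPreconnected hh hb1 hgb)
        rintro z₁ hz₁
        have h1 := hz₁.1
        exact ⟨((hmem (z₁, z')).mp h1).1, hz₁.2⟩
      · have : ((fun z₁ => (z₁, z')) ⁻¹' Z) = ∅ := by
          ext z₁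
          simp only [Set.mem_preimage, Set.mem_empty_iff_false, iff_false, hZdef,
            Set.mem_setOf_eq, not_and]
          intro hmem'
          exact absurd ((hmem (z₁, z')).mp hmem').2 hz'b
        rw [this, measure_empty]
    rw [lintegral_congr_ae hae, lintegral_zero]


/-- The splitting linear equivalence `(Fin (n+1) → ℂ) ≃ ℂ × (Fin n → ℂ)`. -/
noncomputable def splitCLE (n : ℕ) : (Fin (n + 1) → ℂ) ≃L[ℂ] ℂ × (Fin n → ℂ) :=
  LinearEquiv.toContinuousLinearEquiv
    { toFun := fun x => (x 0, fun j => x j.succ)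
      invFun := fun p => Fin.cons p.1 p.2
      map_add' := fun _ _ => rfl
      map_smul' := fun _ _ => rfl
      left_inv := fun x => funext (Fin.cases rfl (fun _ => rfl))
      right_inv := fun p => by
        ext
        · simp
        · simp }

lemma splitCLE_measurePreserving (n : ℕ) :
    MeasurePreserving (⇑(splitCLE n)) volume volume := by
  have h := MeasureTheory.volume_preserving_piFinSuccAbove (fun _ : Fin (n + 1) => ℂ) 0
  have he : ⇑(splitCLE n) = ⇑(MeasurableEquiv.piFinSuccAbove (fun _ : Fin (n + 1) => ℂ) 0) := by
    funext x
    refine Prod.ext rfl ?_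
    funext j
    show x j.succ = x ((0 : Fin (n + 1)).succAbove j)
    rw [Fin.succAbove_zero]
  rw [he]
  exact h

lemma nset_null {E : Type} [NormedAddCommGroup E] [NormedSpace ℂ E] :
    ∀ (n : ℕ) (f : (Fin n → ℂ) → E) (W : Set (Fin n → ℂ)), IsOpen W →
      (∀ x ∈ W, AnalyticAt ℂ f x) →
      volume {x | x ∈ W ∧ f x = 0 ∧ ¬ ∀ᶠ y in nhds x, f y = 0} = 0 := by
  intro n
  induction n with
  | zero =>
    intro f W _ _
    convert measure_empty (μ := (volume : Measure (Fin 0 → ℂ)))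
    ext x
    simp only [Set.mem_setOf_eq, Set.mem_empty_iff_false, iff_false, not_and]
    intro _ hf0 hnev
    exact hnev (Eventually.of_forall fun y => by rw [Subsingleton.elim y x]; exact hf0)
  | succ n IH =>
    intro f W hW hf
    set e := splitCLE n with he
    have hmp := splitCLE_measurePreserving n
    set g : ℂ × (Fin n → ℂ) → E := f ∘ ⇑e.symm with hg
    have hWo' : IsOpen (⇑e '' W) := e.toHomeomorph.isOpen_image.mpr hW
    have hganal : ∀ p ∈ ⇑e '' W, AnalyticAt ℂ g p := by
      rintro p ⟨x, hxW, rfl⟩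
      have h1 : AnalyticAt ℂ (⇑e.symm) (e x) :=
        (e.symm : (ℂ × (Fin n → ℂ)) →L[ℂ] (Fin (n + 1) → ℂ)).analyticAt _
      have h2 : AnalyticAt ℂ f (e.symm (e x)) := by
        rw [e.symm_apply_apply]; exact hf x hxW
      exact h2.comp h1
    have hN' := aux_prod IH g (⇑e '' W) hWo' hganal
    have hNeq : {x | x ∈ W ∧ f x = 0 ∧ ¬ ∀ᶠ y in nhds x, f y = 0}
        = ⇑e ⁻¹' {p | p ∈ ⇑e '' W ∧ g p = 0 ∧ ¬ ∀ᶠ q in nhds p, g q = 0} := by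
      ext x
      simp only [Set.mem_setOf_eq, Set.mem_preimage]
      have h1 : e x ∈ ⇑e '' W ↔ x ∈ W := e.injective.mem_set_image
      have h2 : g (e x) = f x := by rw [hg, Function.comp_apply, e.symm_apply_apply]
      have h3 : (∀ᶠ q in nhds (e x), g q = 0) ↔ ∀ᶠ y in nhds x, f y = 0 := by
        have hnn : nhds (e x) = Filter.map (⇑e) (nhds x) := (e.toHomeomorph.map_nhds_eq x).symm
        rw [hnn, eventually_map]
        constructor <;> intro h <;> filter_upwards [h] with y hy
        · rw [hg, Function.comp_apply, e.symm_apply_apply] at hy; exact hy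
        · show g (e y) = 0
          rw [hg, Function.comp_apply, e.symm_apply_apply]; exact hy
      rw [h1, h2, h3]
    rw [hNeq]
    exact hmp.quasiMeasurePreserving.preimage_null hN'

lemma fix_pow_smul {G : Type*} [Group G] {α : Type*} [MulAction G α] {γ : G} {p : α}
    (h : γ • p = p) : ∀ t : ℕ, γ ^ t • p = p := by
  intro t
  induction t with
  | zero => simp
  | succ t ih => rw [pow_succ, mul_smul, h, ih]


/-- If the set of points with finite orbit of a (not necessarily finitely generated)
group of holomorphic permutations of a nonempty connected open set `U ⊆ ℂⁿ` has
positive Lebesgue measure, then the group is periodic of finite exponent. -/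
theorem finite_exponent_of_measure_pos
    {n : ℕ} (hn : 1 ≤ n) (U : Set (Fin n → ℂ)) (hUne : U.Nonempty)
    (hUo : IsOpen U) (hUc : IsConnected U)
    (G : Subgroup (Equiv.Perm U))
    (hhol : ∀ g ∈ G, ∀ x ∈ U, AnalyticAt ℂ
      (fun y => if h : y ∈ U then ((g ⟨y, h⟩ : U) : Fin n → ℂ) else y) x)
    (hmeas : 0 < volume {x : Fin n → ℂ | ∃ hx : x ∈ U,
      (MulAction.orbit G (⟨x, hx⟩ : U)).Finite}) :
    ∃ m : ℕ, 1 ≤ m ∧ ∀ g ∈ G, g ^ m = 1 := by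
  set S : ℕ → Set (Fin n → ℂ) := fun k => {x | ∃ hx : x ∈ U,
    (MulAction.orbit G (⟨x, hx⟩ : U)).Finite ∧
      (MulAction.orbit G (⟨x, hx⟩ : U)).ncard ≤ k} with hSdef
  -- some S k has positive measure
  have hSk : ∃ k, volume (S k) ≠ 0 := by
    by_contra hall
    push_neg at hall
    have hsub : {x : Fin n → ℂ | ∃ hx : x ∈ U,
        (MulAction.orbit G (⟨x, hx⟩ : U)).Finite} ⊆ ⋃ k, S k := by
      rintro x ⟨hx, hfin⟩
      exact Set.mem_iUnion.mpr ⟨(MulAction.orbit G (⟨x, hx⟩ : U)).ncard, hx, hfin, le_rfl⟩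
    have := measure_mono (μ := (volume : Measure (Fin n → ℂ))) hsub
    rw [measure_iUnion_null hall] at this
    exact absurd (le_antisymm this zero_le) (ne_of_gt hmeas)
  obtain ⟨k, hk⟩ := hSk
  refine ⟨k.factorial, k.factorial_pos, ?_⟩
  intro g hg
  set m := k.factorial with hm
  have hgm : g ^ m ∈ G := pow_mem hg m
  set F : (Fin n → ℂ) → (Fin n → ℂ) :=
    fun y => if h : y ∈ U then (((g ^ m) ⟨y, h⟩ : U) : Fin n → ℂ) else y with hFdef
  set φ : (Fin n → ℂ) → (Fin n → ℂ) := fun y => F y - y with hφdef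
  have hφanal : ∀ x ∈ U, AnalyticAt ℂ φ x := fun x hx =>
    ((hhol (g ^ m) hgm x hx).sub analyticAt_id)
  -- every point of S k is fixed by g ^ m
  have hfix : ∀ x ∈ S k, φ x = 0 := by
    rintro x ⟨hx, hfin, hcard⟩
    set p : U := ⟨x, hx⟩ with hp
    set γ : G := ⟨g, hg⟩ with hγ
    haveI := hfin.fintype
    have hmap : ∀ i ∈ Finset.range (k + 1), γ ^ i • p ∈ hfin.toFinset := by
      intro i _
      rw [Set.Finite.mem_toFinset]
      exact ⟨γ ^ i, rfl⟩
    have hcard' : hfin.toFinset.card < (Finset.range (k + 1)).card := by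
      rw [Finset.card_range]
      have := Set.ncard_eq_toFinset_card (MulAction.orbit G p) hfin
      omega
    obtain ⟨i, hi, j, hj, hij, heq⟩ :=
      Finset.exists_ne_map_eq_of_card_lt_of_maps_to hcard' hmap
    -- wlog i < j
    rcases lt_or_gt_of_ne hij with hlt | hlt
    case _ =>
      have hd : γ ^ (j - i) • p = p := by
        have : γ ^ j = γ ^ i * γ ^ (j - i) := by
          rw [← pow_add]
          congr 1
          omega
        rw [this, mul_smul] at heq
        exact (smul_left_cancel _ heq).symm
      have hdvd : (j - i) ∣ m := Nat.dvd_factorial (by omega)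
        (by have := Finset.mem_range.mp hj; omega)
      obtain ⟨t, ht⟩ := hdvd
      have hγm : γ ^ m • p = p := by
        rw [ht, pow_mul]
        exact fix_pow_smul hd t
      -- translate to the permutation
      have : (g ^ m) p = p := by
        have h1 : (γ ^ m) • p = ((γ ^ m : G) : Equiv.Perm U) • p := rfl
        rw [h1] at hγm
        rw [SubgroupClass.coe_pow] at hγm
        simpa [Equiv.Perm.smul_def] using hγm
      simp only [hφdef, hFdef, dif_pos hx]
      rw [show (⟨x, hx⟩ : U) = p from rfl, this]
      simp [hp]
    case _ =>
      have hd : γ ^ (i - j) • p = p := by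
        have : γ ^ i = γ ^ j * γ ^ (i - j) := by
          rw [← pow_add]
          congr 1
          omega
        rw [this, mul_smul] at heq
        exact smul_left_cancel _ heq
      have hdvd : (i - j) ∣ m := Nat.dvd_factorial (by omega)
        (by have := Finset.mem_range.mp hi; omega)
      obtain ⟨t, ht⟩ := hdvd
      have hγm : γ ^ m • p = p := by
        rw [ht, pow_mul]
        exact fix_pow_smul hd t
      have : (g ^ m) p = p := by
        have h1 : (γ ^ m) • p = ((γ ^ m : G) : Equiv.Perm U) • p := rfl
        rw [h1] at hγm
        rw [SubgroupClass.coe_pow] at hγm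
        simpa [Equiv.Perm.smul_def] using hγm
      simp only [hφdef, hFdef, dif_pos hx]
      rw [show (⟨x, hx⟩ : U) = p from rfl, this]
      simp [hp]
  -- φ vanishes identically on U
  have hN := nset_null n φ U hUo hφanal
  have hx0 : ∃ x₀ ∈ S k, ∀ᶠ y in nhds x₀, φ y = 0 := by
    by_contra hno
    push_neg at hno
    apply hk
    apply measure_mono_null _ hN
    rintro x ⟨hx, hfin, hcard⟩
    exact ⟨hx, hfix x ⟨hx, hfin, hcard⟩, Filter.not_eventually.mpr (hno x ⟨hx, hfin, hcard⟩)⟩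
  obtain ⟨x₀, hx₀S, hev⟩ := hx0
  obtain ⟨hx₀U, -, -⟩ := hx₀S
  have hEqOn : Set.EqOn φ 0 U :=
    AnalyticOnNhd.eqOn_zero_of_preconnected_of_eventuallyEq_zero hφanal
      hUc.isPreconnected hx₀U hev
  -- conclude g ^ m = 1
  apply Equiv.ext
  intro q
  show (g ^ m) q = q
  have hq := hEqOn q.2
  simp only [hφdef, hFdef, Pi.zero_apply, dif_pos q.2, sub_eq_zero] at hq
  have : (g ^ m) ⟨(q : Fin n → ℂ), q.2⟩ = ⟨(q : Fin n → ℂ), q.2⟩ := Subtype.ext hq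
  exact this
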